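/- Let E₀ = [[R₀, p₀],[0, 1]] ∈ SE(n) with R₀ ∈ SO(n) and p₀ ∈ ℝⁿ, and let V = [[Z, v],[0, 0]] with Z ∈ so(n) and v ∈ ℝⁿ. If I − ZᵀZ is positive definite, then, with U = [[√(I − ZᵀZ) − I, 0],[0, 0]], the matrix E₀(I + V + U) lies in SE(n). Moreover, among all matrices U' = [[C, 0],[bᵀ, a]] with C symmetric, I + C positive definite, b ∈ ℝⁿ and a ∈ ℝ, U is the unique one for which E₀(I + V + U') ∈ SE(n); necessarily b = 0, a = 0 and C = √(I − ZᵀZ) − I. -/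

import Mathlib

open Matrix

/-- Membership in `SE(n)`: a real `(n+1)×(n+1)` block matrix of the form
`[[R, p],[0, 1]]` with `R ∈ SO(n)` and `p ∈ ℝⁿ`. -/
def memSE {n : ℕ} (E : Matrix (Fin n ⊕ Fin 1) (Fin n ⊕ Fin 1) ℝ) : Prop :=
  ∃ (R : Matrix (Fin n) (Fin n) ℝ) (p : Matrix (Fin n) (Fin 1) ℝ),
    Rᵀ * R = 1 ∧ R.det = 1 ∧ E = Matrix.fromBlocks R p 0 1

open scoped ComplexOrder in
/-- The positive semidefinite square root of a positive semidefinite matrix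
(Mathlib's former `Matrix.PosSemidef.sqrt`, restated with its old definition). -/
noncomputable def Matrix.PosSemidef.sqrt {n 𝕜 : Type*} [Fintype n] [DecidableEq n] [RCLike 𝕜]
    {A : Matrix n n 𝕜} (hA : A.PosSemidef) : Matrix n n 𝕜 :=
  hA.isHermitian.eigenvectorUnitary.1 * diagonal ((↑) ∘ Real.sqrt ∘ hA.isHermitian.eigenvalues) *
  (star hA.isHermitian.eigenvectorUnitary : Matrix n n 𝕜)

open scoped MatrixOrder ComplexOrder in
lemma Matrix.PosSemidef.sqrt_eq_cfc_sqrt {n 𝕜 : Type*} [Fintype n] [DecidableEq n] [RCLike 𝕜]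
    {A : Matrix n n 𝕜} (hA : A.PosSemidef) : hA.sqrt = CFC.sqrt A := by
  rw [CFC.sqrt_eq_cfc, cfc_nnreal_eq_real _ A, hA.1.cfc_eq]
  simp only [IsHermitian.cfc, Matrix.PosSemidef.sqrt, Unitary.conjStarAlgAut_apply]
  congr 3
  funext i
  simp [Real.coe_sqrt, Real.coe_toNNReal', hA.eigenvalues_nonneg i]

open scoped MatrixOrder ComplexOrder in
lemma Matrix.PosSemidef.sqrt_mul_self {n 𝕜 : Type*} [Fintype n] [DecidableEq n] [RCLike 𝕜]
    {A : Matrix n n 𝕜} (hA : A.PosSemidef) : hA.sqrt * hA.sqrt = A := by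
  rw [hA.sqrt_eq_cfc_sqrt]
  exact CFC.sqrt_mul_sqrt_self A hA.nonneg

open scoped MatrixOrder ComplexOrder in
lemma Matrix.PosSemidef.posSemidef_sqrt {n 𝕜 : Type*} [Fintype n] [DecidableEq n] [RCLike 𝕜]
    {A : Matrix n n 𝕜} (hA : A.PosSemidef) : hA.sqrt.PosSemidef := by
  rw [hA.sqrt_eq_cfc_sqrt]
  exact (CFC.sqrt_nonneg A).posSemidef

open scoped MatrixOrder ComplexOrder in
lemma Matrix.PosSemidef.eq_sqrt_of_sq_eq {n 𝕜 : Type*} [Fintype n] [DecidableEq n] [RCLike 𝕜]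
    {B A : Matrix n n 𝕜} (hB : B.PosSemidef) (hA : A.PosSemidef) (h : B ^ 2 = A) :
    B = hA.sqrt := by
  rw [hA.sqrt_eq_cfc_sqrt, ← h, CFC.sqrt_sq B hB.nonneg]

private lemma trace_transpose_mul_self_eq_zero {m n : ℕ} {M : Matrix (Fin m) (Fin n) ℝ}
    (h : (Mᵀ * M).trace = 0) : M = 0 := by
  have h' : ∑ j, ∑ i, (M i j) ^ 2 = 0 := by
    simpa [Matrix.trace, Matrix.diag, Matrix.mul_apply, sq] using h
  ext i j
  have h1 := (Finset.sum_eq_zero_iff_of_nonneg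
    (fun j _ => Finset.sum_nonneg fun i _ => sq_nonneg (M i j))).mp h' j (Finset.mem_univ _)
  have h2 := (Finset.sum_eq_zero_iff_of_nonneg
    (fun i _ => sq_nonneg (M i j))).mp h1 i (Finset.mem_univ _)
  simpa using pow_eq_zero_iff (two_ne_zero) |>.mp h2

private lemma sylvester_zero {n : ℕ} {S W : Matrix (Fin n) (Fin n) ℝ}
    (hS : S.PosDef) (hWsym : Wᵀ = W) (h : S * W + W * S = 0) : W = 0 := by
  have hSsd := hS.posSemidef
  set T := hSsd.sqrt with hT
  have hTT : T * T = S := hSsd.sqrt_mul_self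
  have hTsym : Tᵀ = T := by
    have h1 := hSsd.posSemidef_sqrt.isHermitian
    rwa [Matrix.IsHermitian, conjTranspose_eq_transpose_of_trivial] at h1
  have hWS : W * S = -(S * W) := by
    have h' : W * S + S * W = 0 := by rw [add_comm]; exact h
    exact eq_neg_of_add_eq_zero_left h'
  have e1 : W * (S * W) = -(S * (W * W)) := by
    rw [← mul_assoc, hWS, neg_mul, mul_assoc]
  have e2 : (W * (S * W)).trace = (S * (W * W)).trace := by
    rw [trace_mul_comm W (S * W), mul_assoc]
  have ht0 : (S * (W * W)).trace = 0 := by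
    have := e2.symm.trans (by rw [e1, trace_neg])
    linarith
  have htr : (W * (S * W)).trace = 0 := by rw [e2]; exact ht0
  have hTW : T * W = 0 := by
    apply trace_transpose_mul_self_eq_zero
    have e3 : (T * W)ᵀ * (T * W) = W * (S * W) := by
      rw [transpose_mul, hTsym, hWsym, mul_assoc, ← mul_assoc T T W, hTT]
    rw [e3]; exact htr
  have hSW : S * W = 0 := by rw [← hTT, mul_assoc, hTW, mul_zero]
  calc W = (S⁻¹ * S) * W := by
          rw [Matrix.nonsing_inv_mul S hS.det_pos.ne'.isUnit, one_mul]
    _ = S⁻¹ * (S * W) := by rw [mul_assoc]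
    _ = 0 := by rw [hSW, mul_zero]

private lemma posDef_sqrt' {n : ℕ} {A : Matrix (Fin n) (Fin n) ℝ} (hA : A.PosDef) :
    (hA.posSemidef.sqrt).PosDef := by
  have hpsd := hA.posSemidef.posSemidef_sqrt
  refine Matrix.PosDef.of_dotProduct_mulVec_pos hpsd.isHermitian (fun x hx => ?_)
  rcases (hpsd.dotProduct_mulVec_nonneg x).lt_or_eq with hlt | heq
  · exact hlt
  · exfalso
    have h0 : hA.posSemidef.sqrt *ᵥ x = 0 :=
      (hpsd.dotProduct_mulVec_zero_iff x).mp heq.symm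
    have hAx : A *ᵥ x = 0 := by
      rw [← hA.posSemidef.sqrt_mul_self, ← Matrix.mulVec_mulVec, h0, Matrix.mulVec_zero]
    have := hA.dotProduct_mulVec_pos hx
    rw [hAx, dotProduct_zero] at this
    exact lt_irrefl 0 this

private lemma det_posDef_add_skew {n : ℕ} {S Z : Matrix (Fin n) (Fin n) ℝ}
    (hS : S.PosDef) (hZ : Zᵀ = -Z) : 0 < (S + Z).det := by
  set f : ℝ → ℝ := fun t => (S + t • Z).det with hf
  have hcont : Continuous f :=
    Continuous.matrix_det (continuous_const.add (continuous_id.smul continuous_const))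
  have hne : ∀ t : ℝ, f t ≠ 0 := by
    intro t h0
    obtain ⟨x, hx, hmx⟩ := (Matrix.exists_mulVec_eq_zero_iff).mpr h0
    have hzq : x ⬝ᵥ Z *ᵥ x = 0 := by
      have h1 : x ⬝ᵥ Z *ᵥ x = -(x ⬝ᵥ Z *ᵥ x) := by
        conv_lhs => rw [dotProduct_mulVec, ← Matrix.mulVec_transpose, hZ,
          Matrix.neg_mulVec, neg_dotProduct, dotProduct_comm]
      linarith
    have hq : x ⬝ᵥ (S + t • Z) *ᵥ x = x ⬝ᵥ S *ᵥ x := by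
      rw [Matrix.add_mulVec, dotProduct_add, Matrix.smul_mulVec,
        dotProduct_smul, hzq, smul_zero, add_zero]
    have hpos : 0 < x ⬝ᵥ S *ᵥ x := by
      have := hS.dotProduct_mulVec_pos hx
      simpa using this
    rw [hmx, dotProduct_zero] at hq
    linarith
  have h0 : 0 < f 0 := by
    have : f 0 = S.det := by simp [hf]
    rw [this]; exact hS.det_pos
  have h1 : 0 < f 1 := by
    rcases lt_trichotomy (f 1) 0 with hlt | heq | hgt
    · exfalso
      have hmem : (0 : ℝ) ∈ Set.Icc (f 1) (f 0) := ⟨le_of_lt hlt, le_of_lt h0⟩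
      obtain ⟨t, _, hft⟩ := intermediate_value_Icc' (by norm_num : (0:ℝ) ≤ 1)
        hcont.continuousOn hmem
      exact hne t hft
    · exact absurd heq (hne 1)
    · exact hgt
  have : f 1 = (S + Z).det := by simp [hf]
  linarith [h1, this ▸ h1]

/-- **TaSP adjustment on `SE(n)`.** For `E₀ = [[R₀, p₀],[0,1]] ∈ SE(n)`,
`V = [[Z, v],[0,0]]` with `Z ∈ so(n)`, `v ∈ ℝⁿ`, and `I - ZᵀZ` positive definite, the
matrix `E₀ (I + V + U)` with `U = [[√(I - ZᵀZ) - I, 0],[0,0]]` lies in `SE(n)`; and `U`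
is the unique matrix `U' = [[C, 0],[bᵀ, a]]` with `C` symmetric and `I + C` positive
definite for which `E₀ (I + V + U') ∈ SE(n)`: necessarily `b = 0`, `a = 0` and
`C = √(I - ZᵀZ) - I`. -/
theorem stmt11 {n : ℕ}
    (R₀ : Matrix (Fin n) (Fin n) ℝ) (p₀ : Matrix (Fin n) (Fin 1) ℝ)
    (hR₀orth : R₀ᵀ * R₀ = 1) (hR₀det : R₀.det = 1)
    (Z : Matrix (Fin n) (Fin n) ℝ) (v : Matrix (Fin n) (Fin 1) ℝ)
    (hZ : Zᵀ = -Z) (hpd : (1 - Zᵀ * Z).PosDef) :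
    memSE (Matrix.fromBlocks R₀ p₀ 0 1 *
        (1 + Matrix.fromBlocks Z v 0 0 + Matrix.fromBlocks ((Matrix.PosSemidef.sqrt hpd.posSemidef) - 1) 0 0 0)) ∧
    (∀ (C : Matrix (Fin n) (Fin n) ℝ) (b : Matrix (Fin 1) (Fin n) ℝ) (a : ℝ),
      Cᵀ = C → (1 + C).PosDef →
      memSE (Matrix.fromBlocks R₀ p₀ 0 1 *
          (1 + Matrix.fromBlocks Z v 0 0 +
            Matrix.fromBlocks C 0 b (Matrix.of fun _ _ => a))) →
      b = 0 ∧ a = 0 ∧ C = (Matrix.PosSemidef.sqrt hpd.posSemidef) - 1) := by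
  set A : Matrix (Fin n) (Fin n) ℝ := 1 - Zᵀ * Z with hA
  set S : Matrix (Fin n) (Fin n) ℝ := hpd.posSemidef.sqrt with hSdef
  have hSS : S * S = A := hpd.posSemidef.sqrt_mul_self
  have hSpd : S.PosDef := posDef_sqrt' hpd
  have hSsym : Sᵀ = S := by
    have h1 := hpd.posSemidef.posSemidef_sqrt.isHermitian
    rwa [Matrix.IsHermitian, conjTranspose_eq_transpose_of_trivial] at h1
  have hAZ : A * Z = Z * A := by
    rw [hA, hZ]
    noncomm_ring
  -- commuting of S and Z
  have hcomm : Z * S = S * Z := by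
    have hW : (Z * S - S * Z) = 0 := by
      apply sylvester_zero hSpd
      · rw [transpose_sub, transpose_mul, transpose_mul, hZ, hSsym]
        noncomm_ring
      · have : S * (Z * S - S * Z) + (Z * S - S * Z) * S = Z * (S * S) - (S * S) * Z := by
          noncomm_ring
        rw [this, hSS, ← hAZ, sub_self]
    rw [sub_eq_zero] at hW
    exact hW
  have horthSZ : (S + Z)ᵀ * (S + Z) = 1 := by
    rw [transpose_add, hSsym, hZ]
    have : (S + -Z) * (S + Z) = S * S - Z * Z + (S * Z - Z * S) := by noncomm_ring
    rw [this, hcomm, sub_self, add_zero, hSS, hA, hZ]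
    noncomm_ring
  have hdetSZ : (S + Z).det = 1 := by
    have hpos := det_posDef_add_skew hSpd hZ
    have hsq : (S + Z).det * (S + Z).det = 1 := by
      have := congrArg Matrix.det horthSZ
      rwa [Matrix.det_mul, Matrix.det_transpose, Matrix.det_one] at this
    nlinarith
  -- the big sum as one block matrix
  have hsum : (1 + Matrix.fromBlocks Z v 0 0 + Matrix.fromBlocks (S - 1) 0 0 0 :
      Matrix (Fin n ⊕ Fin 1) (Fin n ⊕ Fin 1) ℝ) = Matrix.fromBlocks (S + Z) v 0 1 := by
    rw [← Matrix.fromBlocks_one, Matrix.fromBlocks_add, Matrix.fromBlocks_add]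
    have e : (1 : Matrix (Fin n) (Fin n) ℝ) + Z + (S - 1) = S + Z := by abel
    rw [e]
    congr 1 <;> simp
  constructor
  · refine ⟨R₀ * (S + Z), R₀ * v + p₀, ?_, ?_, ?_⟩
    · rw [transpose_mul, mul_assoc, ← mul_assoc R₀ᵀ R₀, hR₀orth, one_mul, horthSZ]
    · rw [Matrix.det_mul, hR₀det, hdetSZ, mul_one]
    · rw [hsum, Matrix.fromBlocks_multiply]
      congr 1 <;> simp
  · intro C b a hCsym hCpd hmem
    obtain ⟨R, p, hRorth, hRdet, hEq⟩ := hmem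
    have hsum2 : (1 + Matrix.fromBlocks Z v 0 0 +
        Matrix.fromBlocks C 0 b (Matrix.of fun _ _ => a) :
        Matrix (Fin n ⊕ Fin 1) (Fin n ⊕ Fin 1) ℝ) =
        Matrix.fromBlocks (1 + Z + C) v b (1 + Matrix.of fun _ _ => a) := by
      rw [← Matrix.fromBlocks_one, Matrix.fromBlocks_add, Matrix.fromBlocks_add]
      congr 1 <;> simp
    rw [hsum2, Matrix.fromBlocks_multiply] at hEq
    -- compare blocks
    have h21 := congrArg Matrix.toBlocks₂₁ hEq
    have h22 := congrArg Matrix.toBlocks₂₂ hEq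
    have h11 := congrArg Matrix.toBlocks₁₁ hEq
    simp only [Matrix.toBlocks_fromBlocks₁₁, Matrix.toBlocks_fromBlocks₂₁,
      Matrix.toBlocks_fromBlocks₂₂, Matrix.zero_mul, Matrix.one_mul, zero_add] at h21 h22 h11
    have hb : b = 0 := h21
    have haz : a = 0 := by
      have h00 := congrFun (congrFun h22 0) 0
      simpa [Matrix.add_apply, Matrix.one_apply] using h00
    have hR : R = R₀ * (1 + Z + C) := by
      rw [hb, Matrix.mul_zero, add_zero] at h11
      exact h11.symm
    -- orthogonality of (1 + Z + C)
    have hMorth : (1 + Z + C)ᵀ * (1 + Z + C) = 1 := by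
      have := hRorth
      rw [hR, transpose_mul, mul_assoc, ← mul_assoc R₀ᵀ R₀, hR₀orth, one_mul] at this
      exact this
    set M : Matrix (Fin n) (Fin n) ℝ := 1 + C with hM
    have hMsym : Mᵀ = M := by rw [hM, transpose_add, transpose_one, hCsym]
    have hT : (1 + Z + C)ᵀ = M - Z := by
      rw [transpose_add, transpose_add, transpose_one, hZ, hCsym, hM]
      abel
    have hMZ : 1 + Z + C = M + Z := by rw [hM]; abel
    rw [hT, hMZ] at hMorth
    have hMorth' : (M + Z) * (M - Z) = 1 := mul_eq_one_comm.mp hMorth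
    have hM2 : M * M = A := by
      have e1 : (M - Z) * (M + Z) + (M + Z) * (M - Z)
          = (M * M - Z * Z) + (M * M - Z * Z) := by noncomm_ring
      rw [hMorth, hMorth'] at e1
      have e2 : M * M - Z * Z = 1 := by
        have h2 : (2 : ℝ) • (M * M - Z * Z) = (2 : ℝ) • (1 : Matrix (Fin n) (Fin n) ℝ) := by
          rw [two_smul, two_smul, ← e1]
        exact smul_right_injective (Matrix (Fin n) (Fin n) ℝ)
          (by norm_num : (2 : ℝ) ≠ 0) h2
      rw [hA, hZ]
      have : M * M = 1 + Z * Z := by rw [← e2]; abel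
      rw [this]; noncomm_ring
    have hMeq : M = S := by
      have : M ^ 2 = A := by rw [pow_two]; exact hM2
      exact hCpd.posSemidef.eq_sqrt_of_sq_eq hpd.posSemidef this
    refine ⟨hb, haz, ?_⟩
    have : C = M - 1 := by rw [hM]; abel
    rw [this, hMeq]
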